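/- Suppose parallel trends with respect to not-yet-treated groups holds: for all g ∈ {2, …, 𝒯}, all t with g ≤ t ≤ 𝒯, all d ∈ 𝒟₊, and every k ∈ {2, …, 𝒯+1} with k > t, E[Y_t(0) − Y_{t−1}(0) | G = g, D = d] = E[Y_t(0) − Y_{t−1}(0) | G = k]. Then for every g ∈ {2, …, 𝒯}, every t with g ≤ t ≤ 𝒯, and every d ∈ 𝒟₊: ATT(g, t, d | g, d) = E[Y_t − Y_{g−1} | G = g, D = d] − E[Y_t − Y_{g−1} | W_t = 0] (note P(W_t = 0) ≥ P(G = 𝒯+1) > 0). -/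

import Mathlib

open MeasureTheory

/-- Conditional expectation of `X` given the event `A`: `E[X | A] = E[X·1_A] / P(A)`. -/
noncomputable def cExp {Ω : Type*} [MeasurableSpace Ω] (P : Measure Ω)
    (X : Ω → ℝ) (A : Set Ω) : ℝ :=
  (∫ ω in A, X ω ∂P) / (P A).toReal

lemma cExp_congr {Ω : Type*} [MeasurableSpace Ω] (P : Measure Ω)
    {f h : Ω → ℝ} {A : Set Ω} (hA : MeasurableSet A) (hfh : ∀ ω ∈ A, f ω = h ω) :
    cExp P f A = cExp P h A := by
  unfold cExp
  rw [setIntegral_congr_fun hA hfh]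

lemma cExp_sub {Ω : Type*} [MeasurableSpace Ω] (P : Measure Ω)
    {f h : Ω → ℝ} (hf : Integrable f P) (hh : Integrable h P) (A : Set Ω) :
    cExp P (fun ω => f ω - h ω) A = cExp P f A - cExp P h A := by
  unfold cExp
  rw [integral_sub hf.restrict hh.restrict, sub_div]

lemma cExp_sum {Ω : Type*} [MeasurableSpace Ω] (P : Measure Ω)
    {ι : Type*} (F : Finset ι) (f : ι → Ω → ℝ) (hf : ∀ s ∈ F, Integrable (f s) P)
    (A : Set Ω) :
    cExp P (fun ω => ∑ s ∈ F, f s ω) A = ∑ s ∈ F, cExp P (f s) A := by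
  unfold cExp
  rw [integral_finset_sum F (fun s hs => (hf s hs).restrict), Finset.sum_div]

/-- Under parallel trends with respect to not-yet-treated groups, for
every group `g ∈ {2,…,T}`, post-treatment period `t` with `g ≤ t ≤ T`, and dose
`d ∈ 𝒟₊`, the group-time ATT is identified by comparison with not-yet-treated units:
`ATT(g,t,d|g,d) = E[Y_t − Y_{g−1} | G = g, D = d] − E[Y_t − Y_{g−1} | W_t = 0]`. -/
theorem att_gtd_identified_not_yet_treated
    {Ω : Type*} [MeasurableSpace Ω] (P : Measure Ω) [IsProbabilityMeasure P]
    (T : ℕ) (hT : 2 ≤ T)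
    (Dpos : Finset ℝ) (hDposNe : Dpos.Nonempty) (hDposPos : ∀ d ∈ Dpos, (0 : ℝ) < d)
    (D : Ω → ℝ) (hD : Measurable D)
    (G : Ω → ℕ) (hG : Measurable G)
    (hGrange : ∀ ω, 2 ≤ G ω ∧ G ω ≤ T + 1)
    (hDval : ∀ ω, D ω = 0 ∨ D ω ∈ Dpos)
    (hD0G : ∀ ω, D ω = 0 ↔ G ω = T + 1)
    (hpNever : 0 < P {ω | G ω = T + 1})
    (hpgd : ∀ g : ℕ, 2 ≤ g → g ≤ T → ∀ d ∈ Dpos, 0 < P {ω | G ω = g ∧ D ω = d})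
    (Y0 : ℕ → Ω → ℝ) (hY0m : ∀ t, Measurable (Y0 t)) (hY0i : ∀ t, Integrable (Y0 t) P)
    (Ypo : ℕ → ℕ → ℝ → Ω → ℝ)
    (hYpom : ∀ t g dd, Measurable (Ypo t g dd)) (hYpoi : ∀ t g dd, Integrable (Ypo t g dd) P)
    (hNoAnt : ∀ t g : ℕ, ∀ dd ∈ Dpos, 2 ≤ g → g ≤ T → t < g → Ypo t g dd = Y0 t)
    (Y : ℕ → Ω → ℝ)
    (hYobs : ∀ t ω, Y t ω = if t < G ω then Y0 t ω else Ypo t (G ω) (D ω) ω)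
    (hPT : ∀ g : ℕ, 2 ≤ g → g ≤ T → ∀ t : ℕ, g ≤ t → t ≤ T → ∀ dd ∈ Dpos,
      ∀ k : ℕ, 2 ≤ k → k ≤ T + 1 → t < k →
        cExp P (fun ω => Y0 t ω - Y0 (t - 1) ω) {ω | G ω = g ∧ D ω = dd} =
          cExp P (fun ω => Y0 t ω - Y0 (t - 1) ω) {ω | G ω = k}) :
    ∀ g : ℕ, 2 ≤ g → g ≤ T → ∀ t : ℕ, g ≤ t → t ≤ T → ∀ dd ∈ Dpos,
      cExp P (fun ω => Ypo t g dd ω - Y0 t ω) {ω | G ω = g ∧ D ω = dd} =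
        cExp P (fun ω => Y t ω - Y (g - 1) ω) {ω | G ω = g ∧ D ω = dd} -
          cExp P (fun ω => Y t ω - Y (g - 1) ω)
            {ω | (if G ω ≤ t then D ω else 0) = 0} := by
  intro g hg2 hgT t hgt htT dd hdd
  set A : Set Ω := {ω | G ω = g ∧ D ω = dd} with hAdef
  set U : Set Ω := {ω | t < G ω} with hUdef
  -- the set of not-yet-treated at time t is U
  have hBU : {ω | (if G ω ≤ t then D ω else 0) = 0} = U := by
    ext ω
    simp only [Set.mem_setOf_eq, hUdef]
    by_cases h : G ω ≤ t
    · simp only [if_pos h]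
      constructor
      · intro h0
        exact absurd ((hD0G ω).mp h0) (by omega)
      · intro h'; omega
    · simp only [if_neg h]
      constructor
      · intro _; omega
      · intro _; trivial
  -- measurability
  have hA : MeasurableSet A := by
    have h1 : MeasurableSet {ω | G ω = g} := hG (measurableSet_singleton g)
    have h2 : MeasurableSet {ω | D ω = dd} := hD (measurableSet_singleton dd)
    exact (h1.inter h2 : MeasurableSet ({ω | G ω = g} ∩ {ω | D ω = dd}))
  have hGk : ∀ k : ℕ, MeasurableSet {ω | G ω = k} := fun k => hG (measurableSet_singleton k)
  have hUm : MeasurableSet U := hG measurableSet_Ioi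
  -- positivity of P U
  have hUsub : {ω | G ω = T + 1} ⊆ U := by
    intro ω hω
    have h1 : G ω = T + 1 := hω
    show t < G ω
    omega
  have hPU : 0 < P U := lt_of_lt_of_le hpNever (measure_mono hUsub)
  have hPUtoReal : (P U).toReal ≠ 0 :=
    (ENNReal.toReal_pos hPU.ne' (measure_ne_top P U)).ne'
  -- key aggregation lemma
  have key : ∀ X : Ω → ℝ, Integrable X P →
      (∀ k : ℕ, t < k → k ≤ T + 1 → cExp P X {ω | G ω = k} = cExp P X A) →
      cExp P X U = cExp P X A := by
    intro X hXi hXk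
    set c := cExp P X A with hc
    have hUeq : U = ⋃ k ∈ Finset.Icc (t + 1) (T + 1), {ω | G ω = k} := by
      ext ω
      simp only [Set.mem_iUnion, Set.mem_setOf_eq, Finset.mem_Icc, exists_prop, hUdef]
      constructor
      · intro h
        exact ⟨G ω, ⟨by omega, (hGrange ω).2⟩, rfl⟩
      · rintro ⟨k, ⟨hk1, _⟩, hk⟩; omega
    have hdisj : (↑(Finset.Icc (t + 1) (T + 1)) : Set ℕ).Pairwise
        (Function.onFun Disjoint fun k => {ω | G ω = k}) := by
      intro i _ j _ hij
      simp only [Function.onFun]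
      apply Set.disjoint_left.mpr
      intro ω h1 h2
      simp only [Set.mem_setOf_eq] at h1 h2
      exact hij (h1 ▸ h2 ▸ rfl)
    have hpiece : ∀ k ∈ Finset.Icc (t + 1) (T + 1),
        (∫ ω in {ω | G ω = k}, X ω ∂P) = c * (P {ω | G ω = k}).toReal := by
      intro k hk
      simp only [Finset.mem_Icc] at hk
      by_cases h0 : P {ω | G ω = k} = 0
      · rw [Measure.restrict_eq_zero.mpr h0, integral_zero_measure, h0]
        simp
      · have heq := hXk k (by omega) hk.2
        unfold cExp at heq
        have hne : (P {ω | G ω = k}).toReal ≠ 0 :=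
          (ENNReal.toReal_pos h0 (measure_ne_top P _)).ne'
        rw [div_eq_iff hne] at heq
        rw [heq]
    have hint : (∫ ω in U, X ω ∂P) = ∑ k ∈ Finset.Icc (t + 1) (T + 1),
        ∫ ω in {ω | G ω = k}, X ω ∂P := by
      rw [hUeq]
      exact integral_biUnion_finset _ (fun k _ => hGk k) hdisj
        (fun k _ => hXi.integrableOn)
    have hmeas : (P U).toReal = ∑ k ∈ Finset.Icc (t + 1) (T + 1),
        (P {ω | G ω = k}).toReal := by
      rw [hUeq, measure_biUnion_finset hdisj (fun k _ => hGk k)]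
      exact ENNReal.toReal_sum (fun k _ => measure_ne_top P _)
    unfold cExp
    rw [hint, Finset.sum_congr rfl hpiece, ← Finset.mul_sum, ← hmeas,
      mul_div_assoc, div_self hPUtoReal, mul_one]
  -- rewrite observed outcomes on A
  have hYA : cExp P (fun ω => Y t ω - Y (g - 1) ω) A =
      cExp P (fun ω => Ypo t g dd ω - Y0 (g - 1) ω) A := by
    apply cExp_congr P hA
    intro ω hω
    obtain ⟨hGω, hDω⟩ := hω
    rw [hYobs t ω, hYobs (g - 1) ω, hGω, hDω, if_neg (by omega), if_pos (by omega)]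
  -- rewrite observed outcomes on U
  have hYU : cExp P (fun ω => Y t ω - Y (g - 1) ω) U =
      cExp P (fun ω => Y0 t ω - Y0 (g - 1) ω) U := by
    apply cExp_congr P hUm
    intro ω hω
    simp only [hUdef, Set.mem_setOf_eq] at hω
    rw [hYobs t ω, hYobs (g - 1) ω, if_pos hω, if_pos (by omega)]
  -- telescoping
  have htel : ∀ u : ℕ, g ≤ u → ∀ ω : Ω,
      Y0 u ω - Y0 (g - 1) ω = ∑ s ∈ Finset.Icc g u, (Y0 s ω - Y0 (s - 1) ω) := by
    intro u hu
    induction u with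
    | zero => omega
    | succ n ih =>
      intro ω
      rcases Nat.lt_or_ge g (n + 1) with h | h
      · have hgn : g ≤ n := by omega
        rw [Finset.sum_Icc_succ_top (by omega : g ≤ n + 1), ← ih hgn ω]
        simp only [Nat.add_sub_cancel]
        ring
      · have hg : g = n + 1 := by omega
        subst hg
        rw [Finset.Icc_self, Finset.sum_singleton]
  have hΔi : ∀ s : ℕ, Integrable (fun ω => Y0 s ω - Y0 (s - 1) ω) P :=
    fun s => (hY0i s).sub (hY0i (s - 1))
  have htelcExp : ∀ S : Set Ω,
      cExp P (fun ω => Y0 t ω - Y0 (g - 1) ω) S =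
        ∑ s ∈ Finset.Icc g t, cExp P (fun ω => Y0 s ω - Y0 (s - 1) ω) S := by
    intro S
    rw [show (fun ω => Y0 t ω - Y0 (g - 1) ω) =
        (fun ω => ∑ s ∈ Finset.Icc g t, (Y0 s ω - Y0 (s - 1) ω)) from
      funext (htel t hgt)]
    exact cExp_sum P _ _ (fun s _ => hΔi s) S
  -- per-step equality via parallel trends and key
  have hstep : ∀ s ∈ Finset.Icc g t,
      cExp P (fun ω => Y0 s ω - Y0 (s - 1) ω) U =
        cExp P (fun ω => Y0 s ω - Y0 (s - 1) ω) A := by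
    intro s hs
    simp only [Finset.mem_Icc] at hs
    exact key _ (hΔi s) (fun k hk1 hk2 =>
      (hPT g hg2 hgT s hs.1 (le_trans hs.2 htT) dd hdd k (by omega) hk2 (by omega)).symm)
  -- main chain
  have hUA : cExp P (fun ω => Y0 t ω - Y0 (g - 1) ω) U =
      cExp P (fun ω => Y0 t ω - Y0 (g - 1) ω) A := by
    rw [htelcExp U, htelcExp A]
    exact Finset.sum_congr rfl hstep
  have i1 : Integrable (fun ω => Ypo t g dd ω - Y0 (g - 1) ω) P :=
    (hYpoi t g dd).sub (hY0i (g - 1))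
  have i2 : Integrable (fun ω => Y0 t ω - Y0 (g - 1) ω) P :=
    (hY0i t).sub (hY0i (g - 1))
  rw [hBU, hYA, hYU, hUA, ← cExp_sub P i1 i2 A]
  apply cExp_congr P hA
  intro ω _
  ring
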